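/- Let Φ_d = (1/d) Σ_{i,j=0}^{d−1} |i⟩⟨j| be the maximally coherent state on ℂ^d. For every density matrix ρ on ℂ^d there exists an incoherent operation T with T(Φ_d) = ρ. -/

import Mathlib

namespace Coherence

open Matrix
open scoped BigOperators ComplexOrder

variable {ι κ : Type*} [Fintype ι] [DecidableEq ι] [Fintype κ] [DecidableEq κ]

/-- A density matrix: positive semidefinite with unit trace. -/
def IsDensity (ρ : Matrix ι ι ℂ) : Prop := ρ.PosSemidef ∧ ρ.trace = 1

/-- The dephasing (decohering) map Δ in the fixed (incoherent) basis. -/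
def dephase (ρ : Matrix ι ι ℂ) : Matrix ι ι ℂ := Matrix.diagonal (fun i => ρ i i)

/-- The pure state |v⟩⟨v| associated with a vector `v`. -/
def pureState (v : ι → ℂ) : Matrix ι ι ℂ := Matrix.of fun i j => v i * star (v j)

/-- `v` is a unit vector. -/
def IsUnitVec (v : ι → ℂ) : Prop := ∑ i, ‖v i‖ ^ 2 = 1

/-- An incoherent Kraus operator: each column has at most one nonzero entry,
i.e. `K = ∑ i c(i) |j(i)⟩⟨i|` for a function `j` on basis indices. -/
def IncoherentKraus (K : Matrix κ ι ℂ) : Prop :=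
  ∀ i : ι, ∃ j : κ, ∀ j' : κ, K j' i ≠ 0 → j' = j

/-- A strictly incoherent Kraus operator: `K` and `K†` are both incoherent. -/
def StrictlyIncoherentKraus (K : Matrix κ ι ℂ) : Prop :=
  IncoherentKraus K ∧ IncoherentKraus Kᴴ

/-- An incoherent operation: a cptp map admitting a Kraus representation by
incoherent Kraus operators. -/
def IsIncoherentOp (T : Matrix ι ι ℂ → Matrix κ κ ℂ) : Prop :=
  ∃ (m : ℕ) (K : Fin m → Matrix κ ι ℂ),
    (∀ ℓ, IncoherentKraus (K ℓ)) ∧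
    (∑ ℓ, (K ℓ)ᴴ * K ℓ = 1) ∧
    (∀ ρ, T ρ = ∑ ℓ, K ℓ * ρ * (K ℓ)ᴴ)

/-- A strictly incoherent operation. -/
def IsStrictlyIncoherentOp (T : Matrix ι ι ℂ → Matrix κ κ ℂ) : Prop :=
  ∃ (m : ℕ) (K : Fin m → Matrix κ ι ℂ),
    (∀ ℓ, StrictlyIncoherentKraus (K ℓ)) ∧
    (∑ ℓ, (K ℓ)ᴴ * K ℓ = 1) ∧
    (∀ ρ, T ρ = ∑ ℓ, K ℓ * ρ * (K ℓ)ᴴ)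

/-- Functional calculus for Hermitian matrices (junk value `0` otherwise). -/
noncomputable def matFun (f : ℝ → ℝ) (A : Matrix ι ι ℂ) : Matrix ι ι ℂ :=
  if h : A.IsHermitian then
    (h.eigenvectorUnitary : Matrix ι ι ℂ) *
      Matrix.diagonal (fun i => (f (h.eigenvalues i) : ℂ)) *
      (star (h.eigenvectorUnitary : Matrix ι ι ℂ))
  else 0

/-- Von Neumann entropy `S(ρ) = −tr ρ log₂ ρ` (with the convention 0 log 0 = 0). -/
noncomputable def vN (ρ : Matrix ι ι ℂ) : ℝ :=
  if h : ρ.IsHermitian then -∑ i, h.eigenvalues i * Real.logb 2 (h.eigenvalues i) else 0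

noncomputable def matLog2 (A : Matrix ι ι ℂ) : Matrix ι ι ℂ := matFun (Real.logb 2) A

noncomputable def matSqrt (A : Matrix ι ι ℂ) : Matrix ι ι ℂ := matFun Real.sqrt A

/-- Quantum relative entropy `S(ρ‖σ) = tr ρ (log₂ ρ − log₂ σ)`. -/
noncomputable def relEnt (ρ σ : Matrix ι ι ℂ) : ℝ :=
  ((ρ * (matLog2 ρ - matLog2 σ)).trace).re

/-- Fidelity `F(ρ,σ) = tr √(√ρ σ √ρ)`. -/
noncomputable def fidelity (ρ σ : Matrix ι ι ℂ) : ℝ :=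
  ((matSqrt (matSqrt ρ * σ * matSqrt ρ)).trace).re

/-- Trace norm `‖A‖₁ = tr √(A†A)`. -/
noncomputable def traceNorm (A : Matrix ι ι ℂ) : ℝ :=
  ((matSqrt (Aᴴ * A)).trace).re

/-- Bures distance `B(ρ,σ) = √2 √(1 − F(ρ,σ))`. -/
noncomputable def bures (ρ σ : Matrix ι ι ℂ) : ℝ :=
  Real.sqrt 2 * Real.sqrt (1 - fidelity ρ σ)

/-- Binary entropy function. -/
noncomputable def binEnt (x : ℝ) : ℝ :=
  -(x * Real.logb 2 x) - (1 - x) * Real.logb 2 (1 - x)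

/-- The `n`-fold tensor (Kronecker) power of a matrix, with indices the product basis. -/
def tpow (ρ : Matrix ι ι ℂ) (n : ℕ) : Matrix (Fin n → ι) (Fin n → ι) ℂ :=
  Matrix.of fun i j => ∏ t, ρ (i t) (j t)

/-- The unit (qubit maximally coherent) state Φ₂. -/
noncomputable def Phi2 : Matrix (Fin 2) (Fin 2) ℂ := Matrix.of fun _ _ => (1 / 2 : ℂ)

/-- Relative entropy of coherence `C_r(ρ) = S(Δ(ρ)) − S(ρ)`. -/
noncomputable def Cr (ρ : Matrix ι ι ℂ) : ℝ := vN (dephase ρ) - vN ρ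

/-- Coherence of formation: the least average entropy of coherence over finite
pure-state decompositions of `ρ`. -/
noncomputable def Cf (ρ : Matrix ι ι ℂ) : ℝ :=
  sInf {x | ∃ (m : ℕ) (p : Fin m → ℝ) (v : Fin m → ι → ℂ),
    (∀ k, 0 ≤ p k) ∧ (∀ k, IsUnitVec (v k)) ∧
    ρ = ∑ k, (p k : ℂ) • pureState (v k) ∧
    x = ∑ k, p k * vN (dephase (pureState (v k)))}

/-- `R` is an achievable coherence-distillation rate for `ρ`. -/
def DistillRate {d : ℕ} (ρ : Matrix (Fin d) (Fin d) ℂ) (R : ℝ) : Prop :=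
  0 ≤ R ∧ ∀ ε > 0, ∃ N : ℕ, ∀ n ≥ N,
    ∃ T : Matrix (Fin n → Fin d) (Fin n → Fin d) ℂ →
          Matrix (Fin ⌊(n : ℝ) * R⌋₊ → Fin 2) (Fin ⌊(n : ℝ) * R⌋₊ → Fin 2) ℂ,
      IsIncoherentOp T ∧ 1 - ε ≤ fidelity (T (tpow ρ n)) (tpow Phi2 ⌊(n : ℝ) * R⌋₊)

/-- Distillable coherence. -/
noncomputable def Cd {d : ℕ} (ρ : Matrix (Fin d) (Fin d) ℂ) : ℝ :=
  sSup {R | DistillRate ρ R}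

/-- `R` is an achievable coherence-formation rate for `ρ`. -/
def FormRate {d : ℕ} (ρ : Matrix (Fin d) (Fin d) ℂ) (R : ℝ) : Prop :=
  0 ≤ R ∧ ∀ ε > 0, ∃ N : ℕ, ∀ n ≥ N,
    ∃ T : Matrix (Fin ⌈(n : ℝ) * R⌉₊ → Fin 2) (Fin ⌈(n : ℝ) * R⌉₊ → Fin 2) ℂ →
          Matrix (Fin n → Fin d) (Fin n → Fin d) ℂ,
      IsIncoherentOp T ∧ 1 - ε ≤ fidelity (T (tpow Phi2 ⌈(n : ℝ) * R⌉₊)) (tpow ρ n)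

/-- Coherence cost. -/
noncomputable def Cc {d : ℕ} (ρ : Matrix (Fin d) (Fin d) ℂ) : ℝ :=
  sInf {R | FormRate ρ R}

/-- Sum of the `t` largest entries of the vector `p` (as a sup over size-`t` subsets). -/
noncomputable def sumTop (p : ι → ℝ) (t : ℕ) : ℝ :=
  sSup {x | ∃ A : Finset ι, A.card = t ∧ x = ∑ i ∈ A, p i}

/-- The spectrum of a Hermitian matrix (junk value `0` otherwise). -/
noncomputable def matSpectrum (A : Matrix ι ι ℂ) : ι → ℝ :=
  if h : A.IsHermitian then h.eigenvalues else 0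

/-- `A ≻ B`: the spectrum of `A` majorizes the spectrum of `B`. -/
def MajorizesMat (A B : Matrix ι ι ℂ) : Prop :=
  (∀ t : ℕ, sumTop (matSpectrum B) t ≤ sumTop (matSpectrum A) t) ∧
  ∑ i, matSpectrum A i = ∑ i, matSpectrum B i

/-- From the maximally coherent state `Φ_d = (1/d) ∑_{i,j} |i⟩⟨j|`, any
density matrix `ρ` on `ℂ^d` can be obtained by an incoherent operation. -/
theorem maxCoherent_generates_all {d : ℕ} (ρ : Matrix (Fin d) (Fin d) ℂ)
    (hρ : IsDensity ρ) :
    ∃ T : Matrix (Fin d) (Fin d) ℂ → Matrix (Fin d) (Fin d) ℂ,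
      IsIncoherentOp T ∧ T (Matrix.of fun _ _ => (1 / (d : ℂ))) = ρ := by
  classical
  obtain ⟨hpsd, htr⟩ := hρ
  have hH : ρ.IsHermitian := hpsd.1
  rcases Nat.eq_zero_or_pos d with hd | hd
  · exfalso
    subst hd
    simp [Matrix.trace] at htr
  haveI : NeZero d := ⟨hd.ne'⟩
  set U : Matrix (Fin d) (Fin d) ℂ := (hH.eigenvectorUnitary : Matrix (Fin d) (Fin d) ℂ) with hU
  set lam : Fin d → ℝ := hH.eigenvalues with hlam
  have hUunit : star U * U = 1 := (Matrix.mem_unitaryGroup_iff').mp hH.eigenvectorUnitary.2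
  have hspec : ρ = U * Matrix.diagonal (fun k => (lam k : ℂ)) * star U := by
    have := hH.spectral_theorem
    rw [Unitary.conjStarAlgAut_apply] at this
    exact this
  have hlam_nonneg : ∀ k, 0 ≤ lam k := fun k => hpsd.eigenvalues_nonneg k
  have hsumlam : ∑ k, (lam k : ℂ) = 1 := by
    have : ρ.trace = ∑ k, (lam k : ℂ) := by
      rw [hspec, Matrix.trace_mul_cycle, hUunit, one_mul, Matrix.trace_diagonal]
    rw [← this, htr]
  -- column normalization : for each k, ∑ a, star (U a k) * U a k = 1
  have hcol : ∀ k : Fin d, ∑ a, star (U a k) * U a k = 1 := by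
    intro k
    have := congrFun (congrFun hUunit k) k
    simpa [Matrix.mul_apply, Matrix.one_apply, Matrix.star_apply] using this
  -- Kraus operators indexed by pairs (k, n)
  set Kp : Fin d × Fin d → Matrix (Fin d) (Fin d) ℂ :=
    fun p => Matrix.of fun a i =>
      if a = i + p.2 then (Real.sqrt (lam p.1) : ℂ) * U a p.1 else 0 with hKp
  set e : Fin d × Fin d ≃ Fin (d * d) := finProdFinEquiv with he
  refine ⟨fun X => ∑ ℓ : Fin (d * d), Kp (e.symm ℓ) * X * (Kp (e.symm ℓ))ᴴ,
    ⟨d * d, fun ℓ => Kp (e.symm ℓ), ?_, ?_, fun _ => rfl⟩, ?_⟩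
  · -- incoherence
    intro ℓ i
    refine ⟨i + (e.symm ℓ).2, fun j' hj' => ?_⟩
    by_contra hne
    apply hj'
    simp [hKp, hne]
  · -- trace preserving
    simp only []
    rw [Equiv.sum_comp e.symm (fun p => (Kp p)ᴴ * Kp p)]
    rw [Fintype.sum_prod_type]
    ext i i'
    simp only [Matrix.sum_apply]
    have hentry : ∀ k n : Fin d, ((Kp (k, n))ᴴ * Kp (k, n)) i i'
        = if i = i' then (lam k : ℂ) * (star (U (i + n) k) * U (i + n) k) else 0 := by
      intro k n
      rw [Matrix.mul_apply]
      have hstar : star ((Real.sqrt (lam k) : ℂ)) = (Real.sqrt (lam k) : ℂ) := by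
        simp [Complex.star_def, Complex.conj_ofReal]
      have hsq : (Real.sqrt (lam k) : ℂ) * (Real.sqrt (lam k) : ℂ) = (lam k : ℂ) := by
        rw [← Complex.ofReal_mul, Real.mul_self_sqrt (hlam_nonneg k)]
      have hterm : ∀ a, (Kp (k, n))ᴴ i a * Kp (k, n) a i'
          = if a = i + n ∧ a = i' + n then (lam k : ℂ) * (star (U a k) * U a k) else 0 := by
        intro a
        simp only [Matrix.conjTranspose_apply, hKp, Matrix.of_apply]
        by_cases h1 : a = i + n
        · by_cases h2 : a = i' + n
          · rw [if_pos h1, if_pos h2, if_pos ⟨h1, h2⟩, star_mul', hstar, ← hsq]; ring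
          · have hcond : ¬(a = i + n ∧ a = i' + n) := fun h => h2 h.2
            rw [if_pos h1, if_neg h2, if_neg hcond, mul_zero]
        · have hcond : ¬(a = i + n ∧ a = i' + n) := fun h => h1 h.1
          rw [if_neg h1, if_neg hcond, star_zero, zero_mul]
      rw [Finset.sum_congr rfl fun a _ => hterm a]
      by_cases hii : i = i'
      · subst hii
        simp only [and_self, if_pos rfl]
        rw [Finset.sum_ite_eq' Finset.univ (i + n)
          (fun a => (lam k : ℂ) * (star (U a k) * U a k))]
        simp
      · rw [if_neg hii]
        refine Finset.sum_eq_zero fun a _ => ?_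
        rw [if_neg]
        rintro ⟨h1, h2⟩
        exact hii (add_right_cancel ((h1.symm.trans h2)))
    rw [Finset.sum_congr rfl fun k _ => Finset.sum_congr rfl fun n _ => hentry k n]
    by_cases hii : i = i'
    · subst hii
      simp only [if_pos rfl, Matrix.one_apply_eq]
      calc ∑ k, ∑ n : Fin d, (lam k : ℂ) * (star (U (i + n) k) * U (i + n) k)
          = ∑ k, (lam k : ℂ) * ∑ n : Fin d, (star (U (i + n) k) * U (i + n) k) := by
            simp [Finset.mul_sum]
        _ = ∑ k, (lam k : ℂ) * 1 := by
            refine Finset.sum_congr rfl fun k _ => ?_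
            congr 1
            rw [← hcol k]
            exact Fintype.sum_equiv (Equiv.addLeft i) _ _ (fun n => by simp [Equiv.addLeft])
        _ = 1 := by simp [hsumlam]
    · rw [Matrix.one_apply_ne hii]
      simp [hii]
  · -- T Φ = ρ
    show (∑ ℓ : Fin (d*d), Kp (e.symm ℓ) * ((Matrix.of fun _ _ => (1 / (d : ℂ))) : Matrix (Fin d) (Fin d) ℂ) * (Kp (e.symm ℓ))ᴴ) = ρ
    rw [Equiv.sum_comp e.symm (fun p => Kp p * ((Matrix.of fun _ _ => (1 / (d : ℂ))) : Matrix (Fin d) (Fin d) ℂ) * (Kp p)ᴴ)]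
    rw [Fintype.sum_prod_type]
    have hrho : ∀ a b, ρ a b = ∑ k, (lam k : ℂ) * (U a k * star (U b k)) := by
      intro a b
      rw [hspec]
      simp [Matrix.mul_apply, Matrix.diagonal_apply, Matrix.star_apply,
        Finset.sum_ite_eq, Finset.mul_sum]
      ring_nf
      refine Finset.sum_congr rfl fun k _ => by ring
    ext a b
    simp only [Matrix.sum_apply]
    rw [hrho a b]
    refine Finset.sum_congr rfl fun k _ => ?_
    have hsumif : ∀ (c : Fin d) (n : Fin d) (z : ℂ),
        (∑ i : Fin d, if c = i + n then z else 0) = z := by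
      intro c n z
      have hcond : ∀ i : Fin d, (c = i + n) = (c - n = i) := by
        intro i
        simp only [sub_eq_iff_eq_add, eq_iff_iff]
      simp only [hcond]
      simp
    have hKmul : ∀ n, (Kp (k, n) * ((Matrix.of fun _ _ => (1 / (d : ℂ))) : Matrix (Fin d) (Fin d) ℂ) * (Kp (k, n))ᴴ) a b
        = (1 / (d : ℂ)) * (((Real.sqrt (lam k) : ℂ) * U a k) *
          star ((Real.sqrt (lam k) : ℂ) * U b k)) := by
      intro n
      rw [Matrix.mul_apply]
      have hmid : ∀ i', (Kp (k, n) * ((Matrix.of fun _ _ => (1 / (d : ℂ))) : Matrix (Fin d) (Fin d) ℂ)) a i'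
          = (1 / (d : ℂ)) * ((Real.sqrt (lam k) : ℂ) * U a k) := by
        intro i'
        rw [Matrix.mul_apply]
        have : ∀ i : Fin d, Kp (k, n) a i * ((Matrix.of fun _ _ => (1 / (d : ℂ))) : Matrix (Fin d) (Fin d) ℂ) i i'
            = if a = i + n then (1 / (d : ℂ)) * ((Real.sqrt (lam k) : ℂ) * U a k) else 0 := by
          intro i
          by_cases h : a = i + n <;> simp [hKp, h, mul_comm]
        rw [Finset.sum_congr rfl fun i _ => this i, hsumif]
      simp only [hmid, Matrix.conjTranspose_apply]
      have : ∀ i' : Fin d, (1 / (d : ℂ)) * ((Real.sqrt (lam k) : ℂ) * U a k) *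
          star (Kp (k, n) b i')
          = if b = i' + n then (1 / (d : ℂ)) * (((Real.sqrt (lam k) : ℂ) * U a k) *
              star ((Real.sqrt (lam k) : ℂ) * U b k)) else 0 := by
        intro i'
        by_cases h : b = i' + n
        · have hKb : Kp (k, n) b i' = (Real.sqrt (lam k) : ℂ) * U b k := by
            rw [hKp]
            simp only [Matrix.of_apply, if_pos h]
          rw [if_pos h, hKb]
          ring
        · simp [hKp, h]
      rw [Finset.sum_congr rfl fun i' _ => this i', hsumif]
    rw [Finset.sum_congr rfl fun n _ => hKmul n, Finset.sum_const]
    have hstar : star ((Real.sqrt (lam k) : ℂ)) = (Real.sqrt (lam k) : ℂ) := by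
      simp [Complex.star_def, Complex.conj_ofReal]
    have hsq : (Real.sqrt (lam k) : ℂ) * (Real.sqrt (lam k) : ℂ) = (lam k : ℂ) := by
      rw [← Complex.ofReal_mul, Real.mul_self_sqrt (hlam_nonneg k)]
    have hd0 : (d : ℂ) ≠ 0 := by
      exact_mod_cast Nat.cast_ne_zero.mpr hd.ne'
    rw [star_mul', hstar]
    have : ((Real.sqrt (lam k) : ℂ) * U a k) * ((Real.sqrt (lam k) : ℂ) * star (U b k))
        = (lam k : ℂ) * (U a k * star (U b k)) := by
      rw [← hsq]; ring
    rw [this]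
    simp only [Finset.card_univ, Fintype.card_fin, nsmul_eq_mul]
    field_simp
  

end Coherence
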